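/- arXiv:1703.06711 — 2 statements merged into one kernel-verified Lean document; each statement's English description precedes it below -/
import Mathlib

section
/- If g : ℝ → ℂ is a Schwartz function, then for every p ≥ 1 there exists a constant C = C(p,g) such that for every natural number n ≥ 1 and every real y with |y| ≤ 1/2, one has |F_n(g)(ny)|² ≤ C / (1 + (n|y|)^p), where F_n(g)(ξ) = (1/n) Σ_{x∈ℤ} g(x/n) e^{2πi x ξ/n} is the discrete Fourier transform of g. -/
set_option maxHeartbeats 1000000

open MeasureTheory Real
open FourierTransform

/-- Scaling of the Fourier integral. -/
lemma fourier_comp_mul (u : ℝ → ℂ) (c : ℝ) (hc : 0 < c) (ξ : ℝ) :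
    𝓕 (fun t => u (c * t)) ξ = (c⁻¹ : ℂ) * 𝓕 u (ξ / c) := by
  have hc' : c ≠ 0 := hc.ne'
  have harg2 : ∀ v : ℝ, -2 * π * (v / c) * ξ = -2 * π * v * (ξ / c) := by
    intro v; field_simp
  have key := MeasureTheory.Measure.integral_comp_mul_left
    (fun x => Complex.exp (↑(-2 * π * (x / c) * ξ) * Complex.I) • u x) c
  calc 𝓕 (fun t => u (c * t)) ξ
      = ∫ t : ℝ, Complex.exp (↑(-2 * π * t * ξ) * Complex.I) • u (c * t) :=
        Real.fourier_real_eq_integral_exp_smul _ ξ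
    _ = ∫ t : ℝ, (fun x => Complex.exp (↑(-2 * π * (x / c) * ξ) * Complex.I) • u x) (c * t) := by
        simp only [mul_div_cancel_left₀ _ hc']
    _ = |c⁻¹| • ∫ x : ℝ, Complex.exp (↑(-2 * π * (x / c) * ξ) * Complex.I) • u x := key
    _ = |c⁻¹| • ∫ x : ℝ, Complex.exp (↑(-2 * π * x * (ξ / c)) * Complex.I) • u x := by
        simp only [harg2]
    _ = |c⁻¹| • 𝓕 u (ξ / c) := by
        rw [← Real.fourier_real_eq_integral_exp_smul]
    _ = (c⁻¹ : ℂ) * 𝓕 u (ξ / c) := by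
        rw [abs_of_pos (inv_pos.mpr hc), Complex.real_smul]; push_cast; ring

/-- The discrete Fourier transform of an integrable function:
`F_n(g)(ξ) = (1/n) Σ_{x∈ℤ} g(x/n) e^{2πi x ξ/n}`. -/
noncomputable def discreteFourier (g : ℝ → ℂ) (n : ℕ) (ξ : ℝ) : ℂ :=
  (1 / (n : ℂ)) * ∑' x : ℤ, g ((x : ℝ) / n) *
    Complex.exp (2 * (π : ℂ) * Complex.I * (x : ℂ) * (ξ : ℂ) / (n : ℂ))

lemma discreteFourier_eq_tsum (g : SchwartzMap ℝ ℂ) (n : ℕ) (hn : 1 ≤ n) (y : ℝ) :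
    discreteFourier (fun u => g u) n ((n : ℝ) * y)
      = ∑' k : ℤ, 𝓕 (⇑g) ((n : ℝ) * ((k : ℝ) - y)) := by
  have hc : (0:ℝ) < (n:ℝ) := by exact_mod_cast hn
  have hc' : (n:ℝ) ≠ 0 := hc.ne'
  have hcC : ((n:ℝ) : ℂ) ≠ 0 := by exact_mod_cast hc'
  set c : ℝ := (n:ℝ) with hcdef
  -- the scaling equivalence
  let e : ℝ ≃L[ℝ] ℝ := (LinearEquiv.smulOfNeZero ℝ ℝ c hc').toContinuousLinearEquiv
  have he : ∀ t : ℝ, e t = c * t := fun t => rfl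
  let G : SchwartzMap ℝ ℂ := SchwartzMap.fourierTransformCLM ℝ g
  have hG : ⇑G = 𝓕 ⇑g := congrArg DFunLike.coe (SchwartzMap.fourierTransformCLM_apply ℝ g)
  let f : SchwartzMap ℝ ℂ := SchwartzMap.compCLMOfContinuousLinearEquiv ℝ e G
  have hf : ∀ t : ℝ, f t = 𝓕 (⇑g) (c * t) := by
    intro t
    show G (e t) = 𝓕 (⇑g) (c * t)
    rw [he, hG]
  -- Fourier inversion
  have hinv : 𝓕⁻ (𝓕 ⇑g) = ⇑g := by
    have h1 := (SchwartzMap.fourierTransformCLE ℝ (SchwartzMap ℝ ℂ)).symm_apply_apply g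
    have h2 : ⇑((SchwartzMap.fourierTransformCLE ℝ (SchwartzMap ℝ ℂ)).symm (SchwartzMap.fourierTransformCLE ℝ (SchwartzMap ℝ ℂ) g))
        = 𝓕⁻ (𝓕 ⇑g) := by
      show ⇑(𝓕⁻ (𝓕 g : SchwartzMap ℝ ℂ) : SchwartzMap ℝ ℂ) = _
      rw [SchwartzMap.fourierInv_coe, SchwartzMap.fourier_coe]
    rw [← h2, h1]
  have hFF : ∀ x : ℝ, 𝓕 (𝓕 ⇑g) x = g (-x) := by
    intro x
    have := Real.fourierInv_eq_fourier_neg (𝓕 ⇑g) (-x)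
    rw [neg_neg, hinv] at this
    exact this.symm
  have hFf : ∀ ξ : ℝ, 𝓕 (⇑f) ξ = ((c:ℂ)⁻¹) * g (-(ξ / c)) := by
    intro ξ
    have h1 : ⇑f = fun t => (𝓕 ⇑g) (c * t) := funext hf
    rw [h1, fourier_comp_mul _ c hc, hFF]
  have poisson : (∑' k : ℤ, f (-y + k)) = ∑' k : ℤ, SchwartzMap.fourierTransformCLM ℝ f k
      * fourier k (↑(-y) : UnitAddCircle) := SchwartzMap.tsum_eq_tsum_fourier f (-y)
  have hL : (∑' k : ℤ, f (-y + k)) = ∑' k : ℤ, 𝓕 (⇑g) (c * ((k:ℝ) - y)) := by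
    refine tsum_congr fun k => ?_
    rw [hf]
    congr 1
    ring
  have hR : (∑' k : ℤ, SchwartzMap.fourierTransformCLM ℝ f k
        * fourier k (↑(-y) : UnitAddCircle))
      = ∑' k : ℤ, ((c:ℂ)⁻¹) * g ((k:ℝ) / c) * Complex.exp (2 * π * Complex.I * k * y) := by
    rw [← (Equiv.neg ℤ).tsum_eq
      (fun k : ℤ => ((c:ℂ)⁻¹) * g ((k:ℝ) / c) * Complex.exp (2 * π * Complex.I * k * y))]
    refine tsum_congr fun k => ?_
    have h1 : SchwartzMap.fourierTransformCLM ℝ f k = 𝓕 (⇑f) k := by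
      rw [SchwartzMap.fourierTransformCLM_apply]; rfl
    rw [h1, hFf, fourier_coe_apply]
    simp only [Equiv.neg_apply, Int.cast_neg, Complex.ofReal_neg]
    congr 2
    all_goals (push_cast; ring)
  rw [hL] at poisson
  rw [poisson, hR]
  have hnC : ((n:ℕ) : ℂ) ≠ 0 := Nat.cast_ne_zero.mpr (by omega)
  have hR2 : (∑' k : ℤ, ((c:ℂ)⁻¹) * g ((k:ℝ) / c) * Complex.exp (2 * π * Complex.I * k * y))
      = ((c:ℂ)⁻¹) * ∑' k : ℤ, g ((k:ℝ) / c) * Complex.exp (2 * π * Complex.I * k * y) := by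
    rw [← tsum_mul_left]
    exact tsum_congr fun k => by ring
  rw [hR2, discreteFourier]
  congr 1
  · rw [one_div, hcdef]; push_cast; ring
  · refine tsum_congr fun x => ?_
    simp only [hcdef]
    congr 2
    push_cast
    field_simp

/-- Decay bound for a Schwartz function. -/
lemma schwartz_decay_bound (u : SchwartzMap ℝ ℂ) (m : ℕ) :
    ∃ E : ℝ, 0 < E ∧ ∀ x : ℝ, ‖u x‖ ≤ E / (1 + |x|) ^ m := by
  set S : ℝ := 2 ^ m *
    (Finset.Iic ((m, 0) : ℕ × ℕ)).sup (fun m => SchwartzMap.seminorm ℝ m.1 m.2) u with hS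
  have hS0 : 0 ≤ S := by
    apply mul_nonneg (by positivity)
    exact apply_nonneg _ _
  refine ⟨S + 1, by linarith, fun x => ?_⟩
  have h := SchwartzMap.one_add_le_sup_seminorm_apply (𝕜 := ℝ) (m := ((m, 0) : ℕ × ℕ))
    le_rfl le_rfl u x
  rw [norm_iteratedFDeriv_zero] at h
  have hpos : (0:ℝ) < (1 + |x|) ^ m := by positivity
  rw [le_div_iff₀ hpos]
  calc ‖u x‖ * (1 + |x|) ^ m = (1 + ‖x‖) ^ m * ‖u x‖ := by
        rw [Real.norm_eq_abs]; ring
    _ ≤ S := h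
    _ ≤ S + 1 := by linarith

theorem stmt_1 (g : SchwartzMap ℝ ℂ) (p : ℝ) (hp : 1 ≤ p) :
    ∃ C : ℝ, 0 < C ∧ ∀ n : ℕ, 1 ≤ n → ∀ y : ℝ, |y| ≤ 1/2 →
      ‖discreteFourier (fun u => g u) n ((n : ℝ) * y)‖ ^ 2
        ≤ C / (1 + ((n : ℝ) * |y|) ^ p) := by
  set m : ℕ := ⌈p⌉₊ with hmdef
  have hpm : p ≤ (m : ℝ) := Nat.le_ceil p
  set G : SchwartzMap ℝ ℂ := SchwartzMap.fourierTransformCLM ℝ g with hGdef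
  have hG : ⇑G = 𝓕 ⇑g := congrArg DFunLike.coe (SchwartzMap.fourierTransformCLM_apply ℝ g)
  obtain ⟨E, hE, hdecay⟩ := schwartz_decay_bound G (m + 2)
  set b : ℤ → ℝ := fun k => (if k = 0 then (1:ℝ) else 0) + 4 / (k:ℝ) ^ 2 with hbdef
  have hb_nonneg : ∀ k : ℤ, 0 ≤ b k := by
    intro k
    apply add_nonneg
    · split <;> norm_num
    · positivity
  have hb_sum : Summable b := by
    apply Summable.add
    · apply summable_of_ne_finset_zero (s := ({0} : Finset ℤ))
      intro k hk
      simp only [Finset.mem_singleton] at hk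
      simp [hk]
    · have h1 : Summable (fun k : ℤ => 1 / (k:ℝ) ^ 2) :=
        summable_one_div_int_pow.mpr (by norm_num)
      exact (h1.mul_left 4).congr fun k => by rw [mul_one_div]
  set B : ℝ := ∑' k : ℤ, b k with hBdef
  have hB1 : 1 ≤ B := by
    have h0 : b 0 = 1 := by simp [hbdef]
    calc (1:ℝ) = b 0 := h0.symm
      _ ≤ B := Summable.le_tsum hb_sum 0 fun k _ => hb_nonneg k
  set D : ℝ := E * B with hDdef
  have hD : 0 < D := mul_pos hE (by linarith)
  refine ⟨2 * D ^ 2 + 1, by positivity, ?_⟩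
  intro n hn y hy
  have hc1 : (1:ℝ) ≤ (n:ℝ) := by exact_mod_cast hn
  have hc0 : (0:ℝ) < (n:ℝ) := by linarith
  set c : ℝ := (n:ℝ) with hcdef
  set t : ℝ := c * |y| with htdef
  have ht0 : 0 ≤ t := by positivity
  have ht1 : (0:ℝ) < 1 + t := by linarith
  -- per-term bound
  have termbound : ∀ k : ℤ, ‖G (c * ((k:ℝ) - y))‖ ≤ E / (1 + t) ^ m * b k := by
    intro k
    rcases eq_or_ne k 0 with h0 | h0
    · subst h0
      have h0b : b 0 = 1 := by simp [hbdef]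
      rw [h0b, mul_one]
      have habs : |c * (((0:ℤ):ℝ) - y)| = t := by
        rw [htdef, abs_mul, abs_of_pos hc0]
        norm_num
      have h1 := hdecay (c * (((0:ℤ):ℝ) - y))
      rw [habs] at h1
      refine h1.trans ?_
      apply div_le_div_of_nonneg_left hE.le (by positivity)
      exact pow_le_pow_right₀ (by linarith) (by omega)
    · have hk1 : (1:ℝ) ≤ |(k:ℝ)| := by
        rw [← Int.cast_abs]
        exact_mod_cast Int.one_le_abs h0
      have hkne : ((k:ℝ)) ≠ 0 := by
        intro h; apply h0; exact_mod_cast h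
      set x : ℝ := c * ((k:ℝ) - y) with hxdef
      have hxabs : |x| = c * |(k:ℝ) - y| := by
        rw [hxdef, abs_mul, abs_of_pos hc0]
      have hxk : c * |(k:ℝ)| / 2 ≤ |x| := by
        rw [hxabs]
        have h1 : |(k:ℝ)| - |y| ≤ |(k:ℝ) - y| := abs_sub_abs_le_abs_sub _ _
        have h2 : |(k:ℝ)| / 2 ≤ |(k:ℝ)| - |y| := by
          have := hy
          linarith
        rw [mul_div_assoc]
        apply mul_le_mul_of_nonneg_left _ hc0.le
        linarith
      have htx : t ≤ |x| := by
        have h1 : t ≤ c * (1/2) := mul_le_mul_of_nonneg_left hy hc0.le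
        have h2 : c * (1/2) ≤ c * |(k:ℝ)| / 2 := by
          rw [mul_div_assoc]
          apply mul_le_mul_of_nonneg_left _ hc0.le
          linarith
        linarith
      have hk2 : (k:ℝ) ^ 2 / 4 ≤ (1 + |x|) ^ 2 := by
        have h1 : |(k:ℝ)| / 2 ≤ 1 + |x| := by
          have h2 : |(k:ℝ)| / 2 ≤ c * |(k:ℝ)| / 2 := by
            rw [mul_div_assoc]
            nlinarith [abs_nonneg (k:ℝ)]
          linarith [abs_nonneg x, hxk]
        have h3 : (|(k:ℝ)| / 2) ^ 2 ≤ (1 + |x|) ^ 2 := by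
          apply pow_le_pow_left₀ (by positivity) h1
        calc (k:ℝ) ^ 2 / 4 = (|(k:ℝ)| / 2) ^ 2 := by
              rw [div_pow, sq_abs]; norm_num
          _ ≤ (1 + |x|) ^ 2 := h3
      have hbk : b k = 4 / (k:ℝ) ^ 2 := by simp [hbdef, h0]
      rw [hbk]
      have h1 := hdecay x
      refine h1.trans ?_
      have hprod : (1 + t) ^ m * ((k:ℝ) ^ 2 / 4) ≤ (1 + |x|) ^ (m + 2) := by
        rw [pow_add]
        apply mul_le_mul _ hk2 (by positivity) (by positivity)
        exact pow_le_pow_left₀ (by linarith) (by linarith) m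
      calc E / (1 + |x|) ^ (m + 2) ≤ E / ((1 + t) ^ m * ((k:ℝ) ^ 2 / 4)) := by
            apply div_le_div_of_nonneg_left hE.le (by positivity) hprod
        _ = E / (1 + t) ^ m * (4 / (k:ℝ) ^ 2) := by
            field_simp
  -- summability and norm bound
  have hbsum' : Summable (fun k : ℤ => E / (1 + t) ^ m * b k) := hb_sum.mul_left _
  have hsum : Summable (fun k : ℤ => ‖G (c * ((k:ℝ) - y))‖) :=
    Summable.of_nonneg_of_le (fun k => norm_nonneg _) termbound hbsum'
  have key := discreteFourier_eq_tsum g n hn y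
  have hF : ‖discreteFourier (fun u => g u) n (c * y)‖ ≤ D / (1 + t) ^ m := by
    rw [key]
    have h1 : (∑' k : ℤ, 𝓕 (⇑g) (c * ((k:ℝ) - y)))
        = ∑' k : ℤ, G (c * ((k:ℝ) - y)) := by
      refine tsum_congr fun k => ?_
      rw [hG]
    rw [h1]
    calc ‖∑' k : ℤ, G (c * ((k:ℝ) - y))‖ ≤ ∑' k : ℤ, ‖G (c * ((k:ℝ) - y))‖ :=
          norm_tsum_le_tsum_norm hsum
      _ ≤ ∑' k : ℤ, E / (1 + t) ^ m * b k := Summable.tsum_le_tsum termbound hsum hbsum'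
      _ = E / (1 + t) ^ m * B := by rw [tsum_mul_left]
      _ = D / (1 + t) ^ m := by rw [hDdef]; ring
  -- final algebra
  have hden : (0:ℝ) < 1 + t ^ p := by positivity
  rw [le_div_iff₀ hden]
  have h1 : ‖discreteFourier (fun u => g u) n (c * y)‖ ^ 2 ≤ D ^ 2 / ((1 + t) ^ m) ^ 2 := by
    have h := pow_le_pow_left₀ (norm_nonneg _) hF 2
    rwa [div_pow] at h
  have hone : (1:ℝ) ≤ (1 + t) ^ m := one_le_pow₀ (by linarith)
  have h2 : 1 + t ^ p ≤ 2 * ((1 + t) ^ m) ^ 2 := by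
    have ha : t ^ p ≤ (1 + t) ^ p := Real.rpow_le_rpow ht0 (by linarith) (by linarith)
    have hb2 : (1 + t) ^ p ≤ (1 + t) ^ ((2 * m : ℕ) : ℝ) := by
      apply Real.rpow_le_rpow_of_exponent_le (by linarith)
      push_cast
      have hm0 : (0:ℝ) ≤ (m:ℝ) := Nat.cast_nonneg m
      linarith
    have hc2 : (1 + t) ^ ((2 * m : ℕ) : ℝ) = ((1 + t) ^ m) ^ 2 := by
      rw [Real.rpow_natCast]
      ring
    nlinarith [ha, hb2]
  calc ‖discreteFourier (fun u => g u) n (c * y)‖ ^ 2 * (1 + t ^ p)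
      ≤ D ^ 2 / ((1 + t) ^ m) ^ 2 * (2 * ((1 + t) ^ m) ^ 2) :=
        mul_le_mul h1 h2 hden.le (by positivity)
    _ = 2 * D ^ 2 := by field_simp
    _ ≤ 2 * D ^ 2 + 1 := by linarith
end

section
/- If g : ℝ → ℂ is a Schwartz function, then for any p ≥ 0, the integral over [-n/2, n/2] of |ξ|^p |F_n(g)(ξ) - F(g)(ξ)|² dξ tends to 0 as n → ∞, where F(g) is the Fourier transform of g and F_n(g) is its discrete Fourier transform. -/
open MeasureTheory Real Filter
open Asymptotics

/-- The (continuous) Fourier transform `F(g)(ξ) = ∫ g(u) e^{2πiξu} du`. -/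
noncomputable def contFourier (g : ℝ → ℂ) (ξ : ℝ) : ℂ :=
  ∫ u : ℝ, g u * Complex.exp (2 * (π : ℂ) * Complex.I * (ξ : ℂ) * (u : ℂ))

lemma contFourier_eq (g : SchwartzMap ℝ ℂ) (y : ℝ) :
    contFourier (fun u => g u) y = SchwartzMap.fourierTransformCLM ℝ g (-y) := by
  rw [SchwartzMap.fourierTransformCLM_apply, SchwartzMap.fourier_coe, Real.fourier_real_eq_integral_exp_smul,
    contFourier]
  congr 1
  ext u
  rw [smul_eq_mul, mul_comm]
  congr 1
  push_cast
  ring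

lemma poisson_key (g : SchwartzMap ℝ ℂ) (n : ℕ) (hn : 1 ≤ n) (ξ : ℝ) :
    discreteFourier (fun u => g u) n ξ
      = ∑' k : ℤ, SchwartzMap.fourierTransformCLM ℝ g ((n : ℝ) * k - ξ) := by
  have hn0 : (n : ℝ) ≠ 0 := by positivity
  have hn0' : (n : ℂ) ≠ 0 := by exact_mod_cast (Nat.cast_ne_zero (R := ℂ)).2 (by omega)
  set G := SchwartzMap.fourierTransformCLM ℝ g with hG
  set f : ℝ → ℂ := fun u => (n : ℂ)⁻¹ * (g (u / n) * Complex.exp (↑(2 * π * u * ξ / n) * Complex.I)) with hf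
  -- compute the Fourier transform of f
  have hFf : ∀ v : ℝ, FourierTransform.fourier f v = G ((n:ℝ) * v - ξ) := by
    intro v
    set F : ℝ → ℂ := fun t => (n : ℂ)⁻¹ * (g t * Complex.exp (↑(-2 * π * t * ((n:ℝ) * v - ξ)) * Complex.I)) with hFdef
    have key : ∀ u : ℝ, Complex.exp (↑(-2 * π * u * v) * Complex.I) • f u = F (u / n) := by
      intro u
      simp only [hf, hFdef, smul_eq_mul]
      rw [mul_left_comm, mul_left_comm (Complex.exp _), ← Complex.exp_add]
      congr 2
      push_cast
      field_simp
      ring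
    rw [Real.fourier_real_eq_integral_exp_smul]
    calc (∫ u : ℝ, Complex.exp (↑(-2 * π * u * v) * Complex.I) • f u)
        = ∫ u : ℝ, F (u / n) := integral_congr_ae (Filter.Eventually.of_forall key)
      _ = |(n : ℝ)| • ∫ t : ℝ, F t := MeasureTheory.Measure.integral_comp_div F n
      _ = G ((n:ℝ) * v - ξ) := by
          rw [hFdef]
          rw [MeasureTheory.integral_const_mul, hG,
            SchwartzMap.fourierTransformCLM_apply, SchwartzMap.fourier_coe, Real.fourier_real_eq_integral_exp_smul,
            _root_.abs_of_nonneg (by positivity : (0:ℝ) ≤ (n:ℝ))]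
          rw [Complex.real_smul, ← mul_assoc]
          push_cast
          rw [mul_inv_cancel₀ hn0', one_mul]
          exact integral_congr_ae (Filter.Eventually.of_forall fun t => by
            simp only [smul_eq_mul]; exact mul_comm _ _)
  have hnpos : (0:ℝ) < n := by positivity
  have hc : Continuous f := by
    apply continuous_const.mul
    apply (g.continuous.comp (continuous_id.div_const _)).mul
    exact Complex.continuous_exp.comp ((Complex.continuous_ofReal.comp (by fun_prop)).mul
      continuous_const)
  have hφ : Tendsto (fun x : ℝ => x / (n:ℝ)) (cocompact ℝ) (cocompact ℝ) := by
    rw [cocompact_eq_atBot_atTop]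
    exact ((tendsto_id.atBot_div_const hnpos).mono_right le_sup_left).sup
      ((tendsto_id.atTop_div_const hnpos).mono_right le_sup_right)
  have hf_bigO : f =O[cocompact ℝ] (fun x : ℝ => |x| ^ (-(2:ℝ))) := by
    have h1 : f =O[cocompact ℝ] (fun x : ℝ => g (x/(n:ℝ))) := by
      apply Asymptotics.isBigO_of_le _ (fun x => ?_)
      simp only [hf, norm_mul, Complex.norm_exp_ofReal_mul_I, mul_one, norm_inv]
      apply mul_le_of_le_one_left (norm_nonneg _)
      rw [Complex.norm_natCast]
      exact inv_le_one_of_one_le₀ (by exact_mod_cast hn)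
    have hcomp : (fun x : ℝ => g (x / (n:ℝ))) =O[cocompact ℝ]
        (fun x : ℝ => |x/(n:ℝ)| ^ (-(2:ℝ))) :=
      (g.isBigO_cocompact_rpow (-2)).comp_tendsto hφ
    have habs : (fun x : ℝ => |x/(n:ℝ)| ^ (-(2:ℝ)))
        = fun x : ℝ => ((n:ℝ)^(2:ℝ)) * |x| ^ (-(2:ℝ)) := by
      funext x
      rw [abs_div, _root_.abs_of_nonneg hnpos.le, Real.div_rpow (abs_nonneg x) hnpos.le,
        div_eq_mul_inv, Real.rpow_neg hnpos.le, inv_inv, mul_comm]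
    rw [habs] at hcomp
    exact h1.trans (hcomp.trans (Asymptotics.isBigO_const_mul_self _ _ _))
  have hψ : Tendsto (fun v : ℝ => (n:ℝ)*v - ξ) (cocompact ℝ) (cocompact ℝ) := by
    rw [cocompact_eq_atBot_atTop]
    simp only [sub_eq_add_neg]
    refine Tendsto.sup ?_ ?_
    · exact ((tendsto_atBot_add_const_right _ (-ξ)
        ((tendsto_id (α := ℝ)).const_mul_atBot hnpos)).mono_right le_sup_left)
    · exact ((tendsto_atTop_add_const_right _ (-ξ)
        ((tendsto_id (α := ℝ)).const_mul_atTop hnpos)).mono_right le_sup_right)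
  have hG_bigO : (fun v : ℝ => G ((n:ℝ)*v - ξ)) =O[cocompact ℝ]
      (fun v : ℝ => |v| ^ (-(2:ℝ))) := by
    have h2 : (fun v : ℝ => G ((n:ℝ)*v - ξ)) =O[cocompact ℝ]
        (fun v : ℝ => |(n:ℝ)*v - ξ| ^ (-(2:ℝ))) :=
      (G.isBigO_cocompact_rpow (-2)).comp_tendsto hψ
    refine h2.trans (Asymptotics.IsBigO.of_bound 4 ?_)
    filter_upwards [tendsto_norm_cocompact_atTop.eventually
      (eventually_ge_atTop (max (2*|ξ|) 1))] with v hv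
    rw [Real.norm_eq_abs] at hv
    have hv1 : (1:ℝ) ≤ |v| := le_trans (le_max_right _ _) hv
    have hvξ : |ξ| ≤ |v|/2 := by
      have := le_trans (le_max_left _ _) hv
      linarith
    have hhalf : |v|/2 ≤ |(n:ℝ)*v - ξ| := by
      have h3 : |(n:ℝ)*v| - |ξ| ≤ |(n:ℝ)*v - ξ| := abs_sub_abs_le_abs_sub _ _
      have h4 : |v| ≤ |(n:ℝ)*v| := by
        rw [abs_mul, _root_.abs_of_nonneg hnpos.le]
        exact le_mul_of_one_le_left (abs_nonneg v) (by exact_mod_cast hn)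
      linarith
    have hpos2 : (0:ℝ) < |v|/2 := by linarith
    rw [Real.norm_eq_abs, Real.norm_eq_abs,
      _root_.abs_of_nonneg (Real.rpow_nonneg (abs_nonneg _) _),
      _root_.abs_of_nonneg (Real.rpow_nonneg (abs_nonneg _) _)]
    calc |(n:ℝ)*v - ξ| ^ (-(2:ℝ)) ≤ (|v|/2) ^ (-(2:ℝ)) :=
          Real.rpow_le_rpow_of_nonpos hpos2 hhalf (by norm_num)
      _ = 4 * |v| ^ (-(2:ℝ)) := by
          rw [Real.div_rpow (abs_nonneg v) (by norm_num : (0:ℝ) ≤ 2),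
            div_eq_mul_inv, Real.rpow_neg (by norm_num : (0:ℝ) ≤ 2), inv_inv, mul_comm]
          norm_num
  have poisson := Real.tsum_eq_tsum_fourier_of_rpow_decay hc one_lt_two hf_bigO
    (by rw [show FourierTransform.fourier f = fun v => G ((n:ℝ)*v - ξ) from funext hFf]
        exact hG_bigO) 0
  have hfour : ∀ k : ℤ, (fourier k (((0:ℝ)) : UnitAddCircle) : ℂ) = 1 := by
    intro k
    norm_num
  simp only [zero_add] at poisson
  have hRHS : ∑' k : ℤ, FourierTransform.fourier f k * fourier k (((0:ℝ)) : UnitAddCircle)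
      = ∑' k : ℤ, G ((n:ℝ)*k - ξ) := by
    apply tsum_congr
    intro k
    rw [hFf, hfour, mul_one]
  rw [discreteFourier, ← hRHS, ← poisson, ← tsum_mul_left]
  apply tsum_congr
  intro k
  simp only [hf, one_div]
  congr 2
  push_cast
  ring

lemma key_bound (g : SchwartzMap ℝ ℂ) (m : ℕ) (hm : 2 ≤ m) :
    ∃ D : ℝ, 0 ≤ D ∧ ∀ n : ℕ, 1 ≤ n → ∀ ξ : ℝ, |ξ| ≤ (n:ℝ)/2 →
      ‖discreteFourier (fun u => g u) n ξ - contFourier (fun u => g u) ξ‖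
        ≤ D * (((n:ℝ)^m)⁻¹) := by
  set G := SchwartzMap.fourierTransformCLM ℝ g with hGdef
  obtain ⟨C, hCpos, hC⟩ := G.decay m 0
  set S := ∑' k : ℤ, |(k:ℝ)| ^ (-(m:ℝ)) with hSdef
  have hmR : (1:ℝ) < m := by exact_mod_cast (by omega : 1 < m)
  have hSsum : Summable (fun k : ℤ => |(k:ℝ)| ^ (-(m:ℝ))) := Real.summable_abs_int_rpow hmR
  have hS0 : 0 ≤ S := tsum_nonneg (fun k => Real.rpow_nonneg (abs_nonneg _) _)
  refine ⟨C * 2^m * S, by positivity, ?_⟩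
  intro n hn ξ hξ
  have hnpos : (0:ℝ) < n := by exact_mod_cast Nat.pos_of_ne_zero (by omega)
  have hGy : ∀ y : ℝ, y ≠ 0 → ‖G y‖ ≤ C / |y|^m := by
    intro y hy
    have h1 := hC y
    rw [norm_iteratedFDeriv_zero] at h1
    rw [le_div_iff₀ (by positivity : (0:ℝ) < |y|^m)]
    calc ‖G y‖ * |y|^m = ‖y‖^m * ‖G y‖ := by rw [Real.norm_eq_abs]; ring
      _ ≤ C := h1
  set M : ℤ → ℝ := fun k => (C * 2^m * ((n:ℝ)^m)⁻¹) * |(k:ℝ)| ^ (-(m:ℝ)) with hMdef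
  have hMsum : Summable M := hSsum.mul_left _
  have hterm : ∀ k : ℤ, ‖(if k = 0 then (0:ℂ) else G ((n:ℝ)*k - ξ))‖ ≤ M k := by
    intro k
    by_cases hk : k = 0
    · have hmne : -(m:ℝ) ≠ 0 := by
        have h7 : (m:ℝ) ≠ 0 := by exact_mod_cast (by omega : m ≠ 0)
        simpa using h7
      simp [hk, hMdef, Real.zero_rpow hmne]
      positivity
    · have hk1 : (1:ℝ) ≤ |(k:ℝ)| := by
        rw [← Int.cast_abs]
        exact_mod_cast Int.one_le_abs (by exact_mod_cast hk)
      have h4 : |(n:ℝ)*k| = (n:ℝ) * |(k:ℝ)| := by rw [abs_mul, _root_.abs_of_nonneg hnpos.le]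
      have hlow : (n:ℝ) * |(k:ℝ)| / 2 ≤ |(n:ℝ)*k - ξ| := by
        have h3 : |(n:ℝ)*(k:ℝ)| - |ξ| ≤ |(n:ℝ)*k - ξ| := abs_sub_abs_le_abs_sub _ _
        have h5 : |ξ| ≤ (n:ℝ) * |(k:ℝ)| / 2 := le_trans hξ (by nlinarith)
        nlinarith
      have hlowpos : (0:ℝ) < (n:ℝ) * |(k:ℝ)| / 2 := by nlinarith
      have hne : (n:ℝ)*k - ξ ≠ 0 := by
        have := lt_of_lt_of_le hlowpos hlow
        exact fun h => by simp [h] at this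
      rw [if_neg hk]
      calc ‖G ((n:ℝ)*k - ξ)‖ ≤ C / |(n:ℝ)*k - ξ|^m := hGy _ hne
        _ ≤ C / ((n:ℝ) * |(k:ℝ)| / 2)^m := by gcongr
        _ = M k := by
            simp only [hMdef]
            have h6 : |(k:ℝ)| ^ (-(m:ℝ)) = (|(k:ℝ)|^m)⁻¹ := by
              rw [← Real.rpow_natCast |(k:ℝ)| m, ← Real.rpow_neg (abs_nonneg _)]
            rw [h6, div_pow, mul_pow]
            have hkpos : (0:ℝ) < |(k:ℝ)| := by linarith
            field_simp
  have hsum2 : Summable (fun k : ℤ => G ((n:ℝ)*k - ξ)) := by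
    apply Summable.of_norm_bounded_eventually hMsum
    rw [Filter.eventually_cofinite]
    apply Set.Finite.subset (Set.finite_singleton (0:ℤ))
    intro k hk
    simp only [Set.mem_singleton_iff]
    by_contra h
    apply hk
    have := hterm k
    rwa [if_neg h] at this
  have hsum3 : Summable (fun k : ℤ => (if k = 0 then (0:ℂ) else G ((n:ℝ)*k - ξ))) :=
    Summable.of_norm_bounded hMsum hterm
  have hdiff : discreteFourier (fun u => g u) n ξ - contFourier (fun u => g u) ξ
      = ∑' k : ℤ, (if k = 0 then (0:ℂ) else G ((n:ℝ)*k - ξ)) := by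
    rw [poisson_key g n hn ξ, contFourier_eq, Summable.tsum_eq_add_tsum_ite hsum2 0]
    simp only [Int.cast_zero, mul_zero, zero_sub, neg_neg]
    ring
  rw [hdiff]
  calc ‖∑' k : ℤ, (if k = 0 then (0:ℂ) else G ((n:ℝ)*k - ξ))‖
      ≤ ∑' k : ℤ, M k := tsum_of_norm_bounded hMsum.hasSum hterm
    _ = (C * 2^m * ((n:ℝ)^m)⁻¹) * S := tsum_mul_left
    _ = C * 2^m * S * ((n:ℝ)^m)⁻¹ := by ring

theorem stmt_2 (g : SchwartzMap ℝ ℂ) (p : ℝ) (hp : 0 ≤ p) :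
    Tendsto (fun n : ℕ =>
        ∫ ξ in (-(n : ℝ)/2)..((n : ℝ)/2),
          |ξ| ^ p * ‖discreteFourier (fun u => g u) n ξ - contFourier (fun u => g u) ξ‖ ^ 2)
      atTop (nhds 0) := by
  set m : ℕ := ⌈p⌉₊ + 2 with hm
  obtain ⟨D, hD0, hD⟩ := key_bound g m (by omega)
  have hmcast : (m:ℝ) = (⌈p⌉₊:ℝ) + 2 := by rw [hm]; push_cast; ring
  have hexp : p + 1 - 2*(m:ℝ) < 0 := by
    have h1 : p ≤ (⌈p⌉₊ : ℝ) := Nat.le_ceil p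
    rw [hmcast]; linarith
  apply squeeze_zero_norm' (a := fun n : ℕ => D^2 * (n:ℝ)^(p + 1 - 2*(m:ℝ)))
  · filter_upwards [eventually_ge_atTop 1] with n hn
    have hnpos : (0:ℝ) < n := by exact_mod_cast Nat.pos_of_ne_zero (by omega)
    have hbound : ∀ ξ ∈ Set.uIoc (-(n:ℝ)/2) ((n:ℝ)/2),
        ‖|ξ| ^ p * ‖discreteFourier (fun u => g u) n ξ - contFourier (fun u => g u) ξ‖ ^ 2‖
          ≤ (n:ℝ)^p * (D * ((n:ℝ)^m)⁻¹)^2 := by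
      intro ξ hξ
      rw [Set.uIoc_of_le (by linarith : -(n:ℝ)/2 ≤ (n:ℝ)/2)] at hξ
      have hξabs : |ξ| ≤ (n:ℝ)/2 := abs_le.2 ⟨by linarith [hξ.1], hξ.2⟩
      rw [Real.norm_eq_abs, _root_.abs_of_nonneg (by positivity)]
      apply mul_le_mul
      · exact Real.rpow_le_rpow (abs_nonneg _) (le_trans hξabs (by linarith)) hp
      · exact pow_le_pow_left₀ (norm_nonneg _) (hD n hn ξ hξabs) 2
      · positivity
      · positivity
    refine le_trans (intervalIntegral.norm_integral_le_of_norm_le_const hbound) (le_of_eq ?_)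
    rw [_root_.abs_of_nonneg (by linarith : (0:ℝ) ≤ (n:ℝ)/2 - (-(n:ℝ)/2))]
    have h2m : ((n:ℝ)^(m:ℕ))⁻¹ ^ (2:ℕ) = (n:ℝ) ^ (-(2*(m:ℝ))) := by
      rw [inv_pow, ← pow_mul, ← Real.rpow_natCast (n:ℝ) (m*2), ← Real.rpow_neg hnpos.le]
      congr 1
      push_cast
      ring
    rw [mul_pow, h2m, Real.rpow_sub hnpos, Real.rpow_add hnpos, Real.rpow_one,
      Real.rpow_neg hnpos.le, show (2*(m:ℝ)) = ((2*m : ℕ):ℝ) by push_cast; ring,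
      Real.rpow_natCast]
    have hnm : ((n:ℝ)^(2*m)) ≠ 0 := by positivity
    field_simp
    ring
  · have h0 : Tendsto (fun n : ℕ => (n:ℝ)^(p + 1 - 2*(m:ℝ))) atTop (nhds 0) := by
      rw [show (p + 1 - 2*(m:ℝ)) = -(-(p + 1 - 2*(m:ℝ))) by ring]
      exact (tendsto_rpow_neg_atTop (by linarith)).comp tendsto_natCast_atTop_atTop
    simpa using h0.const_mul (D^2)
end
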